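/- Let g : (0,∞) → ℝ be convex, non-increasing, continuously differentiable, with g' piecewise differentiable, and suppose there exists γ ∈ (0,1] such that γ·g'(r)² ≤ g''(r) for almost every r ∈ (0,∞). Then for all x, y > 0, (g(y) - g(x))² · γ ≤ (g'(y) - g'(x))·(y - x). -/

import Mathlib

open MeasureTheory Set
open scoped Topology

/-- Cauchy–Schwarz for interval integrals of a continuous function. -/
lemma cs_aux {f : ℝ → ℝ} {a b : ℝ} (hab : a ≤ b) (hf : ContinuousOn f (Set.Icc a b)) :
    (∫ t in a..b, f t)^2 ≤ (b - a) * ∫ t in a..b, (f t)^2 := by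
  rcases eq_or_lt_of_le hab with rfl | hab'
  · simp
  have hfu : ContinuousOn f (Set.uIcc a b) := by rwa [Set.uIcc_of_le hab]
  have hint : IntervalIntegrable f volume a b := hfu.intervalIntegrable
  have hint2 : IntervalIntegrable (fun t => (f t)^2) volume a b :=
    (hfu.pow 2).intervalIntegrable
  set I := ∫ t in a..b, f t with hI
  set J := ∫ t in a..b, (f t)^2 with hJ
  set c : ℝ := I / (b - a) with hc
  have h0 : 0 ≤ ∫ t in a..b, (f t - c)^2 :=
    intervalIntegral.integral_nonneg hab (fun t _ => sq_nonneg _)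
  have hexp : (∫ t in a..b, (f t - c)^2) = J - 2*c*I + (b - a)*c^2 := by
    have heq : (fun t => (f t - c)^2) = fun t => ((f t)^2 - (2*c) * f t) + c^2 := by
      funext t; ring
    rw [heq, intervalIntegral.integral_add (hint2.sub (hint.const_mul (2*c)))
        intervalIntegrable_const,
      intervalIntegral.integral_sub hint2 (hint.const_mul (2*c)),
      intervalIntegral.integral_const_mul, intervalIntegral.integral_const]
    simp only [smul_eq_mul, ← hI, ← hJ]
  rw [hexp] at h0
  have hba : 0 < b - a := sub_pos.2 hab'
  have hc2 : c * (b - a) = I := by rw [hc, div_mul_cancel₀ _ hba.ne']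
  nlinarith [h0, hc2, hba]

/-- Cauchy–Schwarz step of Lemma A.1: for a C¹ convex non-increasing `g` on `(0,∞)`
with a.e. second derivative `g''` satisfying `γ g'(r)² ≤ g''(r)` a.e., one has
`γ (g(y) - g(x))² ≤ (g'(y) - g'(x))(y - x)` for all `x, y > 0`. -/
theorem stmt0 (g g' g'' : ℝ → ℝ) (γ : ℝ) (hγ : γ ∈ Set.Ioc (0:ℝ) 1)
    (hconv : ConvexOn ℝ (Set.Ioi (0:ℝ)) g)
    (hanti : AntitoneOn g (Set.Ioi (0:ℝ)))
    (hderiv : ∀ r ∈ Set.Ioi (0:ℝ), HasDerivAt g (g' r) r)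
    (hcont : ContinuousOn g' (Set.Ioi (0:ℝ)))
    (hderiv2 : ∀ᵐ r ∂volume, r ∈ Set.Ioi (0:ℝ) → HasDerivAt g' (g'' r) r)
    (hineq : ∀ᵐ r ∂volume, r ∈ Set.Ioi (0:ℝ) → γ * (g' r)^2 ≤ g'' r) :
    ∀ x ∈ Set.Ioi (0:ℝ), ∀ y ∈ Set.Ioi (0:ℝ),
      (g y - g x)^2 * γ ≤ (g' y - g' x) * (y - x) := by
  have hγ0 : 0 < γ := hγ.1
  -- the derivative is monotone on `Ioi 0`
  have hmono : MonotoneOn g' (Set.Ioi (0:ℝ)) := by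
    intro a ha b hb hab
    have h := hconv.monotoneOn_deriv (fun t ht => (hderiv t ht).differentiableAt) ha hb hab
    rwa [(hderiv a ha).deriv, (hderiv b hb).deriv] at h
  -- main statement for ordered arguments
  have main : ∀ x ∈ Set.Ioi (0:ℝ), ∀ y ∈ Set.Ioi (0:ℝ), x ≤ y →
      (g y - g x)^2 * γ ≤ (g' y - g' x) * (y - x) := by
    intro x hx y hy hxy
    rcases eq_or_lt_of_le hxy with rfl | hxy'
    · simp
    have hsub : Set.Icc x y ⊆ Set.Ioi (0:ℝ) := fun t ht => lt_of_lt_of_le hx ht.1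
    have hg'c : ContinuousOn g' (Set.Icc x y) := hcont.mono hsub
    -- FTC: g y - g x = ∫ g'
    have hftc : ∫ t in x..y, g' t = g y - g x := by
      apply intervalIntegral.integral_eq_sub_of_hasDerivAt
      · intro t ht
        exact hderiv t (hsub (by rwa [Set.uIcc_of_le hxy] at ht))
      · exact (hcont.mono (by rw [Set.uIcc_of_le hxy]; exact hsub)).intervalIntegrable
    -- Cauchy–Schwarz
    have hcs : (g y - g x)^2 ≤ (y - x) * ∫ t in x..y, (g' t)^2 := by
      rw [← hftc]; exact cs_aux hxy hg'c
    -- the clamped derivative: a monotone continuous function on all of ℝ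
    set c : ℝ → ℝ := fun t => max x (min t y) with hcdef
    have hcmem : ∀ t, c t ∈ Set.Icc x y :=
      fun t => ⟨le_max_left _ _, max_le hxy (min_le_right _ _)⟩
    set F : ℝ → ℝ := fun t => g' (c t) with hFdef
    have hF : Monotone F := fun a b hab =>
      hmono (hsub (hcmem a)) (hsub (hcmem b))
        (max_le_max le_rfl (min_le_min_right _ hab))
    have hccont : Continuous c := continuous_const.max (continuous_id.min continuous_const)
    have hFcont : Continuous F := by
      rw [continuous_iff_continuousAt]
      intro t
      exact (hcont.continuousAt (isOpen_Ioi.mem_nhds (hsub (hcmem t)))).comp hccont.continuousAt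
    have hSF : ∀ t, hF.stieltjesFunction t = F t := by
      intro t
      rw [hF.stieltjesFunction_eq]
      exact rightLim_eq_of_tendsto
        ((hFcont.tendsto t).mono_left nhdsWithin_le_nhds)
    have hFx : F x = g' x := by
      simp only [hFdef, hcdef, min_eq_left hxy, max_self]
    have hFy : F y = g' y := by
      simp only [hFdef, hcdef, min_self, max_eq_right hxy]
    -- the Stieltjes measure of F is finite
    set μ := hF.stieltjesFunction.measure with hμdef
    have hatTop : Filter.Tendsto hF.stieltjesFunction Filter.atTop (𝓝 (g' y)) := by
      apply Filter.Tendsto.congr' _ (tendsto_const_nhds (x := g' y))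
      filter_upwards [Filter.eventually_ge_atTop y] with t ht
      rw [hSF t]
      simp only [hFdef, hcdef, min_eq_right ht, max_eq_right hxy]
    have hatBot : Filter.Tendsto hF.stieltjesFunction Filter.atBot (𝓝 (g' x)) := by
      apply Filter.Tendsto.congr' _ (tendsto_const_nhds (x := g' x))
      filter_upwards [Filter.eventually_le_atBot x] with t ht
      rw [hSF t]
      simp only [hFdef, hcdef, min_eq_left (ht.trans hxy), max_eq_left ht]
    haveI : IsFiniteMeasure μ := hF.stieltjesFunction.isFiniteMeasure hatBot hatTop
    set D : ℝ → ℝ := fun t => (μ.rnDeriv volume t).toReal with hDdef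
    have hDint : IntegrableOn D (Set.Ioo x y) volume :=
      (Measure.integrable_toReal_rnDeriv).integrableOn
    -- a.e. on Ioo x y, γ g'^2 ≤ D
    have hae : ∀ᵐ t ∂volume, t ∈ Set.Ioo x y → γ * (g' t)^2 ≤ D t := by
      filter_upwards [hderiv2, hineq, hF.ae_hasDerivAt] with t h1 h2 h3 ht
      have ht0 : t ∈ Set.Ioi (0:ℝ) := hsub ⟨ht.1.le, ht.2.le⟩
      have hFg : g' =ᶠ[nhds t] F := by
        filter_upwards [isOpen_Ioo.mem_nhds ht] with s hs
        simp only [hFdef, hcdef, min_eq_left hs.2.le, max_eq_right hs.1.le]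
      have hD : HasDerivAt g' (D t) t := h3.congr_of_eventuallyEq hFg
      have heq : g'' t = D t := (h1 ht0).unique hD
      calc γ * (g' t)^2 ≤ g'' t := h2 ht0
        _ = D t := heq
    -- integrability of γ g'^2 on Ioo x y
    have hsqint : IntegrableOn (fun t => γ * (g' t)^2) (Set.Ioo x y) volume := by
      have : IntegrableOn (fun t => γ * (g' t)^2) (Set.Icc x y) volume :=
        (((hg'c.pow 2).const_smul γ).integrableOn_compact isCompact_Icc)
      exact this.mono_set Set.Ioo_subset_Icc_self
    -- key inequality
    have hkey : (∫ t in x..y, γ * (g' t)^2) ≤ g' y - g' x := by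
      rw [intervalIntegral.integral_of_le hxy, MeasureTheory.integral_Ioc_eq_integral_Ioo]
      have h1 : ∫ t in Set.Ioo x y, γ * (g' t)^2 ≤ ∫ t in Set.Ioo x y, D t := by
        apply setIntegral_mono_ae_restrict hsqint hDint
        exact (ae_restrict_iff' measurableSet_Ioo).2 hae
      have h2 : ∫ t in Set.Ioo x y, D t ≤ g' y - g' x := by
        have h3 := Measure.setIntegral_toReal_rnDeriv_le (μ := μ) (ν := volume)
          (s := Set.Ioc x y)
          (by rw [hμdef, StieltjesFunction.measure_Ioc]; exact ENNReal.ofReal_ne_top)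
        have h4 : (μ (Set.Ioc x y)).toReal = g' y - g' x := by
          rw [hμdef, StieltjesFunction.measure_Ioc, hSF, hSF, hFx, hFy,
            ENNReal.toReal_ofReal (sub_nonneg.2 (hmono hx hy hxy))]
        rw [← MeasureTheory.integral_Ioc_eq_integral_Ioo]
        exact h4 ▸ h3
      linarith
    have hpull : ∫ t in x..y, γ * (g' t)^2 = γ * ∫ t in x..y, (g' t)^2 :=
      intervalIntegral.integral_const_mul _ _
    have h5 := mul_le_mul_of_nonneg_right hcs hγ0.le
    have h6 := mul_le_mul_of_nonneg_right (hpull ▸ hkey) (sub_nonneg.2 hxy)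
    nlinarith [h5, h6]
  intro x hx y hy
  rcases le_total x y with h | h
  · exact main x hx y hy h
  · have h7 := main y hy x hx h
    nlinarith [h7]
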